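/- Let c ∈ ℝ. For integers n ≥ 1 define ψ_n(x) := (n² + c²)^{−1/2} √(2/π) (n cos(nx) + c sin(nx)) on [0,π]. Then the family {ψ_n}_{n≥1} is orthonormal in L²((0,π)): for all m, n ≥ 1, ∫₀^π ψ_n(x) ψ_m(x) dx equals 1 if n = m and 0 otherwise. -/

import Mathlib

open Real intervalIntegral

noncomputable section

lemma int_cos_mul (a : ℝ) (ha : a ≠ 0) :
    ∫ x in (0:ℝ)..π, Real.cos (a * x) = Real.sin (a * π) / a := by
  rw [intervalIntegral.integral_comp_mul_left (fun x => Real.cos x) ha]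
  simp [integral_cos, smul_eq_mul, div_eq_inv_mul]

lemma int_sin_mul (a : ℝ) (ha : a ≠ 0) :
    ∫ x in (0:ℝ)..π, Real.sin (a * x) = (1 - Real.cos (a * π)) / a := by
  rw [intervalIntegral.integral_comp_mul_left (fun x => Real.sin x) ha]
  simp [integral_sin, smul_eq_mul]
  ring

lemma int_trig (A B C D a b : ℝ) (ha : a ≠ 0) (hb : b ≠ 0) :
    ∫ x in (0:ℝ)..π,
      (A * Real.cos (a*x) + B * Real.cos (b*x) + C * Real.sin (a*x) + D * Real.sin (b*x)) =
    A * (Real.sin (a*π)/a) + B * (Real.sin (b*π)/b) +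
      C * ((1 - Real.cos (a*π))/a) + D * ((1 - Real.cos (b*π))/b) := by
  have h1 : IntervalIntegrable (fun x => A * Real.cos (a*x)) MeasureTheory.volume 0 π := by
    apply Continuous.intervalIntegrable; continuity
  have h2 : IntervalIntegrable (fun x => B * Real.cos (b*x)) MeasureTheory.volume 0 π := by
    apply Continuous.intervalIntegrable; continuity
  have h3 : IntervalIntegrable (fun x => C * Real.sin (a*x)) MeasureTheory.volume 0 π := by
    apply Continuous.intervalIntegrable; continuity
  have h4 : IntervalIntegrable (fun x => D * Real.sin (b*x)) MeasureTheory.volume 0 π := by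
    apply Continuous.intervalIntegrable; continuity
  rw [intervalIntegral.integral_add (h1.add h2 |>.add h3) h4,
      intervalIntegral.integral_add (h1.add h2) h3,
      intervalIntegral.integral_add h1 h2,
      intervalIntegral.integral_const_mul, intervalIntegral.integral_const_mul,
      intervalIntegral.integral_const_mul, intervalIntegral.integral_const_mul,
      int_cos_mul a ha, int_cos_mul b hb, int_sin_mul a ha, int_sin_mul b hb]

lemma int_trig' (A B D b : ℝ) (hb : b ≠ 0) :
    ∫ x in (0:ℝ)..π, (A + B * Real.cos (b*x) + D * Real.sin (b*x)) =
    A * π + B * (Real.sin (b*π)/b) + D * ((1 - Real.cos (b*π))/b) := by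
  have h1 : IntervalIntegrable (fun _ : ℝ => A) MeasureTheory.volume 0 π := by
    apply Continuous.intervalIntegrable; continuity
  have h2 : IntervalIntegrable (fun x => B * Real.cos (b*x)) MeasureTheory.volume 0 π := by
    apply Continuous.intervalIntegrable; continuity
  have h4 : IntervalIntegrable (fun x => D * Real.sin (b*x)) MeasureTheory.volume 0 π := by
    apply Continuous.intervalIntegrable; continuity
  rw [intervalIntegral.integral_add (h1.add h2) h4, intervalIntegral.integral_add h1 h2,
      intervalIntegral.integral_const_mul, intervalIntegral.integral_const_mul,
      int_cos_mul b hb, int_sin_mul b hb]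
  simp [mul_comm]

/-- The Robin eigenfunctions `ψ_n = (n²+c²)^{-1/2} A φ_n^D` on `[0,π]`. -/
def robinEigen (c : ℝ) (n : ℕ) (x : ℝ) : ℝ :=
  (Real.sqrt ((n : ℝ) ^ 2 + c ^ 2))⁻¹ * Real.sqrt (2 / Real.pi) *
    ((n : ℝ) * Real.cos ((n : ℝ) * x) + c * Real.sin ((n : ℝ) * x))

theorem robinEigen_orthonormal (c : ℝ) :
    ∀ m n : ℕ, 1 ≤ m → 1 ≤ n →
      ∫ x in (0 : ℝ)..Real.pi, robinEigen c n x * robinEigen c m x =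
        if n = m then 1 else 0 := by
  intro m n hm hn
  set N : ℝ := (n : ℝ) with hNdef
  set M : ℝ := (m : ℝ) with hMdef
  have hNpos : (0:ℝ) < N := by rw [hNdef]; exact_mod_cast Nat.lt_of_lt_of_le Nat.zero_lt_one hn
  have hMpos : (0:ℝ) < M := by rw [hMdef]; exact_mod_cast Nat.lt_of_lt_of_le Nat.zero_lt_one hm
  have hNM : N + M ≠ 0 := by positivity
  have hKN : (0:ℝ) < N^2 + c^2 := by positivity
  have hKM : (0:ℝ) < M^2 + c^2 := by positivity
  have hsqN : Real.sqrt (N^2 + c^2) ^ 2 = N^2 + c^2 := Real.sq_sqrt hKN.le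
  have hsqM : Real.sqrt (M^2 + c^2) ^ 2 = M^2 + c^2 := Real.sq_sqrt hKM.le
  -- factor out the constants
  have factor : ∀ x, robinEigen c n x * robinEigen c m x =
      ((Real.sqrt (N^2+c^2))⁻¹ * (Real.sqrt (M^2+c^2))⁻¹ * (Real.sqrt (2/π))^2) *
        ((N * Real.cos (N*x) + c * Real.sin (N*x)) * (M * Real.cos (M*x) + c * Real.sin (M*x))) := by
    intro x; unfold robinEigen; ring
  have hπ : (0:ℝ) < π := Real.pi_pos
  have hsq2 : Real.sqrt (2/π) ^ 2 = 2/π := Real.sq_sqrt (by positivity)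
  rw [intervalIntegral.integral_congr (fun x _ => factor x), intervalIntegral.integral_const_mul]
  rcases eq_or_ne n m with h | h
  · -- diagonal case
    subst h
    have hM2 : (2:ℝ) * N ≠ 0 := by positivity
    have expand : ∀ x : ℝ,
        (N * Real.cos (N*x) + c * Real.sin (N*x)) * (N * Real.cos (N*x) + c * Real.sin (N*x)) =
        (N^2 + c^2)/2 + (N^2 - c^2)/2 * Real.cos ((2*N)*x) + (N*c) * Real.sin ((2*N)*x) := by
      intro x
      have h2 : (2*N)*x = N*x + N*x := by ring
      rw [h2, Real.cos_add, Real.sin_add]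
      have hs := Real.sin_sq_add_cos_sq (N*x)
      nlinarith [hs]
    rw [intervalIntegral.integral_congr (fun x _ => expand x), int_trig' _ _ _ _ hM2]
    have hcos : Real.cos ((2*N)*π) = 1 := by
      have : (2*N)*π = (n:ℤ) * (2*π) := by push_cast [hNdef]; ring
      rw [this, Real.cos_int_mul_two_pi]
    have hsin : Real.sin ((2*N)*π) = 0 := by
      have : (2*N)*π = ((2*n : ℤ) : ℝ) * π := by push_cast [hNdef]; ring
      rw [this, Real.sin_int_mul_pi]
    rw [hcos, hsin]
    rw [if_pos rfl]
    have hsN : Real.sqrt (N^2+c^2) ≠ 0 := by positivity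
    field_simp
    have hMN : M = N := by rw [hMdef, hNdef]
    have hss : Real.sqrt (N^2+c^2) * Real.sqrt (N^2+c^2) = N^2+c^2 := Real.mul_self_sqrt hKN.le
    rw [hsq2, hMN, mul_assoc N (Real.sqrt (N^2+c^2)) (Real.sqrt (N^2+c^2)), hss,
      div_mul_eq_mul_div, div_eq_iff hπ.ne']
    ring
  · -- off-diagonal case
    have hNM' : N - M ≠ 0 := by
      intro hc
      apply h
      have : N = M := by linarith
      rw [hNdef, hMdef] at this
      exact_mod_cast this
    have expand : ∀ x : ℝ,
        (N * Real.cos (N*x) + c * Real.sin (N*x)) * (M * Real.cos (M*x) + c * Real.sin (M*x)) =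
        (N*M + c^2)/2 * Real.cos ((N-M)*x) + (N*M - c^2)/2 * Real.cos ((N+M)*x)
          + (c*(M-N)/2) * Real.sin ((N-M)*x) + (c*(N+M)/2) * Real.sin ((N+M)*x) := by
      intro x
      have e1 : (N-M)*x = N*x - M*x := by ring
      have e2 : (N+M)*x = N*x + M*x := by ring
      rw [e1, e2, Real.cos_sub, Real.cos_add, Real.sin_sub, Real.sin_add]
      ring
    rw [intervalIntegral.integral_congr (fun x _ => expand x),
        int_trig _ _ _ _ _ _ hNM' hNM]
    have hsin1 : Real.sin ((N-M)*π) = 0 := by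
      have : (N-M)*π = (((n:ℤ) - m : ℤ) : ℝ) * π := by push_cast [hNdef, hMdef]; ring
      rw [this, Real.sin_int_mul_pi]
    have hsin2 : Real.sin ((N+M)*π) = 0 := by
      have : (N+M)*π = (((n:ℤ) + m : ℤ) : ℝ) * π := by push_cast [hNdef, hMdef]; ring
      rw [this, Real.sin_int_mul_pi]
    have hcoseq : Real.cos ((N-M)*π) = Real.cos ((N+M)*π) := by
      have : (N-M)*π = (N+M)*π - (m:ℤ) * (2*π) := by push_cast [hMdef]; ring
      rw [this, Real.cos_sub_int_mul_two_pi]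
    rw [hsin1, hsin2, hcoseq, if_neg h]
    field_simp
    ring
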